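/- With G̃ as above (sequences in ∏ G_n that are eventually constant), G̃^+ the set of elements with all coordinates ≥ 0, and order unit e = (1,1,1,...): every ordered-group automorphism α of (G̃, G̃^+) with α(e) = e fixes the element e_1 = (1, 0, 0, 0, ...). (Proof sketch: e_1 generates the subgroup of elements infinitely p_1-divisible in G̃ together with positivity; α(e_1) = (t,0,0,...) with t ∈ G_1, t > 0; positivity of α(e - e_1) gives t ≤ 1, and applying the same argument to α^{-1} gives t ≥ 1.) -/

import Mathlib

/-- the `j`-th prime (`prime10 0 = 2`, `prime10 1 = 3`, ...). -/
noncomputable def prime10 (j : ℕ) : ℕ := Nat.nth Nat.Prime j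

/-- membership in the group `G_n = { m / (p₁^{k₁} ⋯ p_{n-1}^{k_{n-1}} pₙ^l) }`
(indexed from `0`). -/
noncomputable def Gmem10 (k : ℕ → ℕ) (n : ℕ) (q : ℚ) : Prop :=
  ∃ m : ℤ, ∃ l : ℕ,
    q = (m : ℚ) / ((∏ j ∈ Finset.range n, (prime10 j : ℚ) ^ k j) * (prime10 n : ℚ) ^ l)

/-- membership in `G̃`: eventually constant sequences with `a n ∈ G_n` for all `n`. -/
noncomputable def Gtilde10 (k : ℕ → ℕ) (a : ℕ → ℚ) : Prop :=
  (∀ n, Gmem10 k n (a n)) ∧ ∃ N, ∀ m, N ≤ m → a m = a N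


lemma prime10_prime (j : ℕ) : (prime10 j).Prime := Nat.prime_nth_prime j

lemma prime10_pos (j : ℕ) : 0 < prime10 j := (prime10_prime j).pos

lemma prime10_zero : prime10 0 = 2 := Nat.nth_prime_zero_eq_two

lemma prime10_odd {j : ℕ} (hj : 1 ≤ j) : Odd (prime10 j) := by
  refine (prime10_prime j).odd_of_ne_two ?_
  have := Nat.add_two_le_nth_prime j
  unfold prime10; omega

lemma denom_pos (k : ℕ → ℕ) (n l : ℕ) :
    0 < (∏ j ∈ Finset.range n, (prime10 j : ℚ) ^ k j) * (prime10 n : ℚ) ^ l := by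
  have h : ∀ j, (0:ℚ) < (prime10 j : ℚ) := fun j => by exact_mod_cast prime10_pos j
  exact mul_pos (Finset.prod_pos fun j _ => pow_pos (h j) _) (pow_pos (h n) _)

lemma Gmem10_zero (k : ℕ → ℕ) (n : ℕ) : Gmem10 k n 0 := ⟨0, 0, by simp⟩

lemma Gmem10_one (k : ℕ → ℕ) (n : ℕ) : Gmem10 k n 1 := by
  refine ⟨(∏ j ∈ Finset.range n, (prime10 j : ℤ) ^ k j), 0, ?_⟩
  rw [eq_div_iff (by have := denom_pos k n 0; positivity)]
  push_cast
  ring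

lemma Gmem10_intmul (k : ℕ → ℕ) (n : ℕ) (a : ℤ) {q : ℚ} (h : Gmem10 k n q) :
    Gmem10 k n ((a : ℚ) * q) := by
  obtain ⟨m, l, rfl⟩ := h
  exact ⟨a * m, l, by push_cast; ring⟩

lemma Gmem10_neg (k : ℕ → ℕ) (n : ℕ) {q : ℚ} (h : Gmem10 k n q) : Gmem10 k n (-q) := by
  have := Gmem10_intmul k n (-1) h
  simpa using this

lemma Gmem10_add (k : ℕ → ℕ) (n : ℕ) {q r : ℚ} (hq : Gmem10 k n q) (hr : Gmem10 k n r) :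
    Gmem10 k n (q + r) := by
  obtain ⟨m1, l1, rfl⟩ := hq
  obtain ⟨m2, l2, rfl⟩ := hr
  refine ⟨m1 * (prime10 n : ℤ) ^ l2 + m2 * (prime10 n : ℤ) ^ l1, l1 + l2, ?_⟩
  have h1 := denom_pos k n l1
  have h2 := denom_pos k n l2
  have h3 := denom_pos k n (l1 + l2)
  rw [div_add_div _ _ h1.ne' h2.ne', div_eq_div_iff (mul_ne_zero h1.ne' h2.ne') h3.ne']
  push_cast
  ring

lemma Gmem10_odd_denom (k : ℕ → ℕ) {n : ℕ} (hn : 1 ≤ n) {q : ℚ} (h : Gmem10 k n q) :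
    ∃ D : ℕ, Odd D ∧ ∃ m : ℤ, q * (2 : ℚ) ^ (k 0) * (D : ℚ) = (m : ℚ) := by
  obtain ⟨m, l, rfl⟩ := h
  refine ⟨(∏ j ∈ (Finset.range n).erase 0, (prime10 j) ^ k j) * (prime10 n) ^ l, ?_, m, ?_⟩
  · apply Odd.mul
    · refine Finset.prod_induction _ Odd (fun a b => Odd.mul) odd_one ?_
      intro j hj
      simp only [Finset.mem_erase, Finset.mem_range] at hj
      exact (prime10_odd (by omega)).pow
    · exact (prime10_odd hn).pow
  · have hsplit : (∏ j ∈ Finset.range n, (prime10 j : ℚ) ^ k j)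
        = (2 : ℚ) ^ (k 0) * ∏ j ∈ (Finset.range n).erase 0, (prime10 j : ℚ) ^ k j := by
      rw [← Finset.mul_prod_erase (Finset.range n) (fun j => (prime10 j : ℚ) ^ k j)
        (a := 0) (Finset.mem_range.mpr (by omega))]
      simp [prime10_zero]
    have hd := denom_pos k n l
    rw [hsplit] at hd ⊢
    push_cast
    rw [div_mul_eq_mul_div, div_mul_eq_mul_div, div_eq_iff hd.ne']
    ring

lemma key_zero (k : ℕ → ℕ) {n : ℕ} (hn : 1 ≤ n) {q : ℚ}
    (h : ∀ M : ℕ, ∃ z : ℚ, Gmem10 k n z ∧ q = 2 ^ M * z) : q = 0 := by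
  set r : ℚ := q * (2 : ℚ) ^ (k 0) with hr
  have hdvd : ∀ M : ℕ, (2 : ℤ) ^ M ∣ r.num := by
    intro M
    obtain ⟨z, hz, hq⟩ := h M
    obtain ⟨D, hD, m, hm⟩ := Gmem10_odd_denom k hn hz
    have hD0 : (D : ℚ) ≠ 0 := by
      have : D ≠ 0 := by rintro rfl; simp at hD
      exact_mod_cast this
    have hr' : r * D = 2 ^ M * m := by
      rw [hr, hq]
      linear_combination (2:ℚ) ^ M * hm
    -- cross-multiply with num/den
    have hden : (r.den : ℚ) ≠ 0 := by exact_mod_cast r.den_nz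
    have hnum : (r.num : ℚ) * D = 2 ^ M * m * r.den := by
      rw [← Rat.num_div_den r] at hr'
      field_simp at hr'
      linear_combination hr'
    have hz' : (r.num : ℤ) * D = 2 ^ M * m * r.den := by exact_mod_cast hnum
    have hdv : (2 : ℤ) ^ M ∣ r.num * D := ⟨m * r.den, by linarith [hz']⟩
    have hcop : IsCoprime ((2 : ℤ) ^ M) (D : ℤ) := by
      apply IsCoprime.pow_left
      rw [Int.prime_two.irreducible.coprime_iff_not_dvd]
      obtain ⟨t, ht⟩ := hD
      rintro ⟨c, hc⟩
      omega

    exact hcop.dvd_of_dvd_mul_right hdv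
  have hr0 : r.num = 0 := by
    refine Int.eq_zero_of_abs_lt_dvd (hdvd r.num.natAbs) ?_
    rw [Int.abs_eq_natAbs]
    exact_mod_cast (Nat.lt_two_pow_self (n := r.num.natAbs))
  have : r = 0 := Rat.zero_iff_num_zero.mpr hr0
  rw [hr] at this
  have h2 : ((2:ℚ)) ^ (k 0) ≠ 0 := by positivity
  exact (mul_eq_zero.mp this).resolve_right h2
lemma Gtilde10_zero (k : ℕ → ℕ) : Gtilde10 k 0 :=
  ⟨fun n => Gmem10_zero k n, 0, fun _ _ => rfl⟩

lemma Gtilde10_one (k : ℕ → ℕ) : Gtilde10 k (fun _ => 1) :=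
  ⟨fun n => Gmem10_one k n, 0, fun _ _ => rfl⟩

lemma Gtilde10_add (k : ℕ → ℕ) {x y : ℕ → ℚ} (hx : Gtilde10 k x) (hy : Gtilde10 k y) :
    Gtilde10 k (x + y) := by
  obtain ⟨hx1, N1, hN1⟩ := hx
  obtain ⟨hy1, N2, hN2⟩ := hy
  refine ⟨fun n => Gmem10_add k n (hx1 n) (hy1 n), max N1 N2, fun m hm => ?_⟩
  simp only [Pi.add_apply]
  rw [hN1 m (le_trans (le_max_left _ _) hm), hN2 m (le_trans (le_max_right _ _) hm),
    hN1 (max N1 N2) (le_max_left _ _), hN2 (max N1 N2) (le_max_right _ _)]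

lemma Gtilde10_intmul (k : ℕ → ℕ) (a : ℤ) {x : ℕ → ℚ} (hx : Gtilde10 k x) :
    Gtilde10 k (fun i => (a : ℚ) * x i) := by
  obtain ⟨hx1, N, hN⟩ := hx
  exact ⟨fun n => Gmem10_intmul k n a (hx1 n), N, fun m hm => by simp only []; rw [hN m hm]⟩

lemma Gtilde10_natmul (k : ℕ → ℕ) (a : ℕ) {x : ℕ → ℚ} (hx : Gtilde10 k x) :
    Gtilde10 k (fun i => (a : ℚ) * x i) := by
  have := Gtilde10_intmul k (a : ℤ) hx
  push_cast at this
  exact this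

lemma Gtilde10_neg (k : ℕ → ℕ) {x : ℕ → ℚ} (hx : Gtilde10 k x) : Gtilde10 k (-x) := by
  have := Gtilde10_intmul k (-1) hx
  exact (by simpa using this : Gtilde10 k fun i => -x i)

section alg
variable {k : ℕ → ℕ} {α : (ℕ → ℚ) → (ℕ → ℚ)}
  (hαmap : ∀ x, Gtilde10 k x → Gtilde10 k (α x))
  (hαadd : ∀ x y, Gtilde10 k x → Gtilde10 k y → α (x + y) = α x + α y)

include hαadd in
lemma alpha_zero : α 0 = 0 := by
  have h := hαadd 0 0 (Gtilde10_zero k) (Gtilde10_zero k)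
  rw [add_zero] at h
  funext i
  have := congrFun h i
  simp only [Pi.add_apply, Pi.zero_apply] at this ⊢
  linarith


include hαadd in
lemma alpha_natmul {x : ℕ → ℚ} (hx : Gtilde10 k x) (a : ℕ) :
    α (fun i => (a : ℚ) * x i) = fun i => (a : ℚ) * α x i := by
  induction a with
  | zero =>
    simp only [Nat.cast_zero, zero_mul]
    have h0 : α 0 = 0 := alpha_zero hαadd
    calc α (fun _ => (0:ℚ)) = α 0 := rfl
    _ = 0 := h0
    _ = fun _ => (0:ℚ) := rfl
  | succ a ih =>
    have hax : Gtilde10 k (fun i => (a : ℚ) * x i) := Gtilde10_natmul k a hx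
    have : (fun i => ((a:ℚ) + 1) * x i) = (fun i => (a:ℚ) * x i) + x := by
      funext i; simp [Pi.add_apply]; ring
    push_cast
    rw [this, hαadd _ _ hax hx, ih]
    funext i
    simp [Pi.add_apply]; ring
end alg
lemma Gmem10_zero_pow2 (k : ℕ → ℕ) (M : ℕ) : Gmem10 k 0 (((2:ℚ) ^ M)⁻¹) :=
  ⟨1, M, by simp [prime10_zero]⟩

lemma Gtilde10_spike (k : ℕ → ℕ) {c : ℚ} (hc : Gmem10 k 0 c) :
    Gtilde10 k (fun n => if n = 0 then c else 0) := by
  refine ⟨fun n => ?_, 1, fun m hm => ?_⟩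
  · rcases n with _ | n
    · simpa using hc
    · simpa using Gmem10_zero k (n + 1)
  · simp only []
    rw [if_neg (by omega), if_neg (by omega)]

lemma Gtilde10_cospike (k : ℕ → ℕ) :
    Gtilde10 k (fun n => if n = 0 then 0 else 1) := by
  refine ⟨fun n => ?_, 1, fun m hm => ?_⟩
  · rcases n with _ | n
    · simpa using Gmem10_zero k 0
    · simpa using Gmem10_one k (n + 1)
  · simp only []
    rw [if_neg (by omega), if_neg (by omega)]

lemma main_aux (k : ℕ → ℕ) (hk : ∀ j, 1 ≤ k j)
    (α : (ℕ → ℚ) → (ℕ → ℚ))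
    (hαmap : ∀ x, Gtilde10 k x → Gtilde10 k (α x))
    (hαadd : ∀ x y, Gtilde10 k x → Gtilde10 k y → α (x + y) = α x + α y)
    (hpos : ∀ x, Gtilde10 k x → ((∀ n, 0 ≤ x n) ↔ ∀ n, 0 ≤ α x n))
    (hone : α (fun _ => 1) = fun _ => 1) :
    ∃ c : ℚ, 0 ≤ c ∧ c ≤ 1 ∧ Gmem10 k 0 c ∧
      α (fun n => if n = 0 then 1 else 0) = fun n => if n = 0 then c else 0 := by
  set E1 : ℕ → ℚ := fun n => if n = 0 then 1 else 0 with hE1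
  have hE1t : Gtilde10 k E1 := Gtilde10_spike k (Gmem10_one k 0)
  -- vanishing of higher coordinates
  have hvanish : ∀ n, 1 ≤ n → α E1 n = 0 := by
    intro n hn
    apply key_zero k hn
    intro M
    set w : ℕ → ℚ := fun i => if i = 0 then ((2:ℚ) ^ M)⁻¹ else 0 with hw
    have hwt : Gtilde10 k w := Gtilde10_spike k (Gmem10_zero_pow2 k M)
    have hkey : (fun i => ((2 ^ M : ℕ) : ℚ) * w i) = E1 := by
      funext i
      rcases i with _ | i
      · simp [hw, hE1]
      · simp [hw, hE1]
    refine ⟨α w n, (hαmap w hwt).1 n, ?_⟩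
    have := alpha_natmul hαadd hwt (2 ^ M)
    rw [hkey] at this
    have := congrFun this n
    push_cast at this
    linarith
  set c : ℚ := α E1 0 with hc
  have hshape : α E1 = fun n => if n = 0 then c else 0 := by
    funext n
    rcases n with _ | n
    · simp [hc]
    · simp [hvanish (n + 1) (by omega)]
  have hcmem : Gmem10 k 0 c := (hαmap E1 hE1t).1 0
  have hc0 : 0 ≤ c := by
    have := (hpos E1 hE1t).mp (fun n => by rcases n with _ | n <;> simp [hE1]) 0
    simpa [hc] using this
  have hc1 : c ≤ 1 := by
    set F : ℕ → ℚ := fun n => if n = 0 then 0 else 1 with hF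
    have hFt : Gtilde10 k F := Gtilde10_cospike k
    have hsum : F + E1 = fun _ => 1 := by
      funext n
      rcases n with _ | n <;> simp [hF, hE1, Pi.add_apply]
    have hadd := hαadd F E1 hFt hE1t
    rw [hsum, hone] at hadd
    have hFpos := (hpos F hFt).mp (fun n => by rcases n with _ | n <;> simp [hF]) 0
    have := congrFun hadd 0
    simp only [Pi.add_apply, hc] at this
    linarith
  exact ⟨c, hc0, hc1, hcmem, hshape⟩
/-- every ordered-group automorphism `α` of `(G̃, G̃⁺)` fixing the order
unit `e = (1,1,1,…)` fixes `e₁ = (1,0,0,…)`.  The automorphism is encoded by a pair of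
mutually inverse maps `α, β` preserving `G̃`, additive on `G̃`, and preserving
positivity. -/
theorem stmt_10 (k : ℕ → ℕ) (hk : ∀ j, 1 ≤ k j)
    (α β : (ℕ → ℚ) → (ℕ → ℚ))
    (hαmap : ∀ x, Gtilde10 k x → Gtilde10 k (α x))
    (hβmap : ∀ x, Gtilde10 k x → Gtilde10 k (β x))
    (hαadd : ∀ x y, Gtilde10 k x → Gtilde10 k y → α (x + y) = α x + α y)
    (hβα : ∀ x, Gtilde10 k x → β (α x) = x)
    (hαβ : ∀ x, Gtilde10 k x → α (β x) = x)
    (hpos : ∀ x, Gtilde10 k x → ((∀ n, 0 ≤ x n) ↔ ∀ n, 0 ≤ α x n))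
    (hone : α (fun _ => 1) = fun _ => 1) :
    α (fun n => if n = 0 then 1 else 0) = fun n => if n = 0 then 1 else 0 := by
  have hβadd : ∀ x y, Gtilde10 k x → Gtilde10 k y → β (x + y) = β x + β y := by
    intro x y hx hy
    have hbx := hβmap x hx
    have hby := hβmap y hy
    have hsum : Gtilde10 k (β x + β y) := Gtilde10_add k hbx hby
    have h1 : α (β x + β y) = x + y := by rw [hαadd _ _ hbx hby, hαβ x hx, hαβ y hy]
    calc β (x + y) = β (α (β x + β y)) := by rw [h1]
    _ = β x + β y := hβα _ hsum
  have hβpos : ∀ x, Gtilde10 k x → ((∀ n, 0 ≤ x n) ↔ ∀ n, 0 ≤ β x n) := by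
    intro x hx
    have h := hpos (β x) (hβmap x hx)
    rw [hαβ x hx] at h
    exact h.symm
  have hβone : β (fun _ => 1) = fun _ => 1 := by
    have h := hβα _ (Gtilde10_one k)
    rwa [hone] at h
  obtain ⟨c, hc0, hc1, hcmem, hcshape⟩ := main_aux k hk α hαmap hαadd hpos hone
  obtain ⟨s, hs0, hs1, hsmem, hsshape⟩ := main_aux k hk β hβmap hβadd hβpos hβone
  set E1 : ℕ → ℚ := fun n => if n = 0 then 1 else 0 with hE1def
  have hE1t : Gtilde10 k E1 := Gtilde10_spike k (Gmem10_one k 0)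
  obtain ⟨a, l, hs⟩ := hsmem
  simp only [Finset.range_zero, Finset.prod_empty, one_mul, prime10_zero] at hs
  push_cast at hs
  have h2l : (0:ℚ) < 2 ^ l := by positivity
  have hsa : s * 2 ^ l = (a:ℚ) := by
    rw [hs]; field_simp
  have ha0 : 0 ≤ a := by
    by_contra hneg
    push_neg at hneg
    have h1 : (a:ℚ) < 0 := by exact_mod_cast hneg
    nlinarith [mul_nonneg hs0 h2l.le]
  set A : ℕ := a.toNat with hA
  have hAa : ((A:ℤ):ℚ) = (a:ℚ) := by rw [hA, Int.toNat_of_nonneg ha0]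
  push_cast at hAa
  have hmulEq : (fun i => ((2 ^ l : ℕ) : ℚ) * (β E1) i) = (fun i => ((A:ℕ):ℚ) * E1 i) := by
    funext i
    rw [hsshape]
    rcases i with _ | i
    · simp only [hE1def, if_pos rfl, mul_one]
      push_cast
      rw [hAa]
      linear_combination hsa
    · simp [hE1def]
  have L := alpha_natmul hαadd (hβmap E1 hE1t) (2 ^ l)
  have R := alpha_natmul hαadd hE1t A
  rw [hmulEq, R, hαβ E1 hE1t] at L
  have hL0 := congrFun L 0
  rw [hcshape] at hL0
  simp only [hcshape, hE1def, if_pos rfl, mul_one] at hL0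
  -- hL0 : A * c = 2^l
  push_cast at hL0
  have hAle : ((A:ℕ):ℚ) ≤ 2 ^ l := by
    rw [hAa, ← hsa]
    nlinarith [hs1, h2l]
  have hceq : c = 1 := by
    push_cast at hAle hL0
    nlinarith [hL0, hAle, hc0, hc1, h2l]
  rw [hcshape, hceq]
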